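/- Let n > 3 and work in the affine space AG(n−1,3), i.e., the vector space (ZMod 3)^{n−1}, with affine basis a_1 = 0 and a_{i+1} = the i-th standard basis vector for 1 ≤ i ≤ n−1. For 1 ≤ i ≤ n let H_i be the affine span over ZMod 3 of {a_j : j ≠ i}, let X = H_1 ∪ … ∪ H_n, and let T be the family of 3-element sets {x, y, z} of distinct points with x + y + z = 0 that are contained in at least one H_i. Then T is a partial Steiner triple system (every pair of distinct points is contained in at most one member of T), the closure of {a_1, …, a_n} with respect to T equals X, and for each i the closure of {a_j : j ≠ i} with respect to T equals H_i, which is a proper subset of X; consequently {a_1, …, a_n} is a minimal spreading set of the partial system T on the point set X. -/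

import Mathlib

/-- A Steiner triple system on `V`: a family `T` of 3-element `Finset`s such that
every pair of distinct points lies in exactly one member of `T`. -/
def IsSTS {V : Type*} (T : Set (Finset V)) : Prop :=
  (∀ t ∈ T, t.card = 3) ∧
    ∀ x y : V, x ≠ y → ∃! t : Finset V, t ∈ T ∧ x ∈ t ∧ y ∈ t

/-- `W` is closed w.r.t. the triple system `T`: whenever a triple of `T` contains two
points of `W`, all (in particular the third) of its points lie in `W`. -/
def StsClosed {V : Type*} (T : Set (Finset V)) (W : Set V) : Prop :=
  ∀ t ∈ T, ∀ x ∈ t, ∀ y ∈ t, x ≠ y → x ∈ W → y ∈ W → ∀ z ∈ t, z ∈ W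

/-- The closure of `S` w.r.t. `T`: the smallest closed set containing `S`. -/
def stsCl {V : Type*} (T : Set (Finset V)) (S : Set V) : Set V :=
  ⋂₀ {W : Set V | S ⊆ W ∧ StsClosed T W}

/-- `S` is a spreading set: its closure is the whole point set. -/
def IsSpreading {V : Type*} (T : Set (Finset V)) (S : Set V) : Prop :=
  stsCl T S = Set.univ

/-- `S` is a minimal spreading set: it is spreading but no proper subset is. -/
def IsMinSpreading {V : Type*} (T : Set (Finset V)) (S : Set V) : Prop :=
  IsSpreading T S ∧ ∀ S' : Set V, S' ⊂ S → ¬ IsSpreading T S'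

/-- The affine base of `AG(n-1,3) = (ZMod 3)^(n-1)`: `a 0 = 0` and, for `i ≥ 1`,
`a i` is the `(i-1)`-st standard basis vector. -/
def basePt (n : ℕ) (i : Fin n) : Fin (n - 1) → ZMod 3 :=
  if h : (i : ℕ) = 0 then 0
  else Pi.single (⟨(i : ℕ) - 1, by have := i.isLt; omega⟩ : Fin (n - 1)) 1

section helpers
variable {V : Type*}

lemma subset_stsCl (T : Set (Finset V)) (S : Set V) : S ⊆ stsCl T S :=
  fun _ hx => Set.mem_sInter.2 fun _ hW => hW.1 hx

lemma stsCl_le {T : Set (Finset V)} {S W : Set V} (h1 : S ⊆ W) (h2 : StsClosed T W) :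
    stsCl T S ⊆ W :=
  Set.sInter_subset_of_mem ⟨h1, h2⟩

lemma stsCl_closed (T : Set (Finset V)) (S : Set V) : StsClosed T (stsCl T S) := by
  intro t ht x hxt y hyt hxy hx hy z hz
  exact Set.mem_sInter.2 fun W hW =>
    hW.2 t ht x hxt y hyt hxy (Set.mem_sInter.1 hx W hW) (Set.mem_sInter.1 hy W hW) z hz

lemma stsCl_mono {T : Set (Finset V)} {S S' : Set V} (h : S' ⊆ S) :
    stsCl T S' ⊆ stsCl T S :=
  Set.sInter_subset_sInter fun _ hW => ⟨h.trans hW.1, hW.2⟩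

end helpers

section mod3
variable {V : Type*} [AddCommGroup V] [Module (ZMod 3) V]

lemma three_add_self (v : V) : v + v + v = 0 := by
  have h : ((1 : ZMod 3) + 1 + 1) • v = 0 := by
    rw [show (1 : ZMod 3) + 1 + 1 = 0 by decide, zero_smul]
  rwa [add_smul, add_smul, one_smul] at h

lemma neg_sub_self3 (x : V) : -x - x = x := by
  rw [← sub_eq_zero, show -x - x - x = -(x + x + x) by abel, three_add_self, neg_zero]

lemma third_ne_left {x y : V} (hxy : x ≠ y) : x ≠ -x - y := by
  intro h
  apply hxy
  have h2 : -x - y = -x - x := by rw [← h]; exact (neg_sub_self3 x).symm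
  exact (sub_right_inj.1 h2).symm

lemma third_ne_right {x y : V} (hxy : x ≠ y) : y ≠ -x - y := by
  intro h
  apply hxy
  have e : -x - y = -y - y := by rw [neg_sub_self3]; exact h.symm
  exact neg_inj.1 (sub_left_inj.1 e)

lemma neg_sub_mem (A : AffineSubspace (ZMod 3) V) {x y : V} (hx : x ∈ A) (hy : y ∈ A) :
    -x - y ∈ A := by
  have h := A.smul_vsub_vadd_mem (-1 : ZMod 3) hx hy hy
  rw [vsub_eq_sub, vadd_eq_add] at h
  have e : (-1 : ZMod 3) • (x - y) + y = -x - y := by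
    have h3 := three_add_self y
    rw [neg_smul, one_smul, ← sub_eq_zero,
      show -(x - y) + y - (-x - y) = y + y + y by abel, h3]
  rwa [e] at h

lemma span_le_of_closedW {S W : Set V} (hSW : S ⊆ W)
    (hW : ∀ x ∈ W, ∀ y ∈ W, -x - y ∈ W) :
    (affineSpan (ZMod 3) S : Set V) ⊆ W := by
  let A : AffineSubspace (ZMod 3) V :=
    { carrier := W
      smul_vsub_vadd_mem' := by
        intro c p1 p2 p3 h1 h2 h3
        rw [vsub_eq_sub, vadd_eq_add]
        have hc : c = 0 ∨ c = 1 ∨ c = -1 := by revert c; decide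
        have key : ∀ a ∈ W, ∀ b ∈ W, ∀ d ∈ W, a - b + d ∈ W := by
          intro a ha b hb d hd
          have k1 : -a - d ∈ W := hW a ha d hd
          have k2 : -(-a - d) - b ∈ W := hW _ k1 b hb
          rwa [show -(-a - d) - b = a - b + d by abel] at k2
        rcases hc with rfl | rfl | rfl
        · rw [zero_smul, zero_add]; exact h3
        · rw [one_smul]; exact key _ h1 _ h2 _ h3
        · rw [show (-1 : ZMod 3) • (p1 - p2) + p3 = p2 - p1 + p3 by
            rw [neg_smul, one_smul]; abel]
          exact key _ h2 _ h1 _ h3 }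
  exact (affineSpan_le (s := S) (Q := A)).2 hSW

variable [DecidableEq V]

lemma triple_eq {x y : V} {t : Finset V} (h3 : t.card = 3) (hs : ∑ z ∈ t, z = 0)
    (hx : x ∈ t) (hy : y ∈ t) (hxy : x ≠ y) : t = {x, y, -x - y} := by
  obtain ⟨a, b, c, hab, hac, hbc, rfl⟩ := Finset.card_eq_three.1 h3
  rw [Finset.sum_insert (by simp [hab, hac]), Finset.sum_insert (by simp [hbc]),
    Finset.sum_singleton] at hs
  simp only [Finset.mem_insert, Finset.mem_singleton] at hx hy
  rcases hx with rfl | rfl | rfl <;> rcases hy with rfl | rfl | rfl <;>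
      first
      | exact absurd rfl hxy
      | (first
        | (have h : c = -x - y := by
            rw [← sub_eq_zero, show c - (-x - y) = x + (y + c) by abel]; exact hs)
        | (have h : c = -x - y := by
            rw [← sub_eq_zero, show c - (-x - y) = y + (x + c) by abel]; exact hs)
        | (have h : b = -x - y := by
            rw [← sub_eq_zero, show b - (-x - y) = x + (b + y) by abel]; exact hs)
        | (have h : b = -x - y := by
            rw [← sub_eq_zero, show b - (-x - y) = y + (b + x) by abel]; exact hs)
        | (have h : a = -x - y := by
            rw [← sub_eq_zero, show a - (-x - y) = a + (x + y) by abel]; exact hs)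
        | (have h : a = -x - y := by
            rw [← sub_eq_zero, show a - (-x - y) = a + (y + x) by abel]; exact hs)) <;>
        (subst h; ext z;
         simp only [Finset.mem_insert, Finset.mem_singleton]; try tauto)

lemma line_card {x y : V} (hxy : x ≠ y) : ({x, y, -x - y} : Finset V).card = 3 := by
  rw [Finset.card_insert_of_notMem (by simp [hxy, third_ne_left hxy]),
    Finset.card_insert_of_notMem (by simp [third_ne_right hxy]), Finset.card_singleton]

lemma line_sum {x y : V} (hxy : x ≠ y) : ∑ z ∈ ({x, y, -x - y} : Finset V), z = 0 := by
  rw [Finset.sum_insert (by simp [hxy, third_ne_left hxy]),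
    Finset.sum_insert (by simp [third_ne_right hxy]), Finset.sum_singleton]
  abel

end mod3

/-- Construction of a partial Steiner triple system with a minimal spreading set of
size `n`: in `AG(n-1,3)` with affine base `a 0, …, a (n-1)`, let `H i` be the affine
span of the base points other than `a i`, let `X = ⋃ i, H i`, and let `T` consist of
the affine lines (3-element sets of distinct points summing to `0`) contained in some
`H i`. Then `T` is a partial STS (each pair of points lies in at most one triple),
`cl {a 0, …, a (n-1)} = X`, and for each `i` the closure of the base points other
than `a i` is `H i ⊊ X`; consequently `{a 0, …, a (n-1)}` is a minimal spreading set
of the partial system `T` on the point set `X`. -/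
theorem partial_sts_minSpreading_n (n : ℕ) (hn : 3 < n) :
    ∀ H : Fin n → Set (Fin (n - 1) → ZMod 3),
      H = (fun i => (affineSpan (ZMod 3) (basePt n '' {j | j ≠ i}) : Set _)) →
    ∀ X : Set (Fin (n - 1) → ZMod 3), X = ⋃ i, H i →
    ∀ T : Set (Finset (Fin (n - 1) → ZMod 3)),
      T = {t | t.card = 3 ∧ ∑ x ∈ t, x = 0 ∧ ∃ i, ↑t ⊆ H i} →
    (∀ x y : Fin (n - 1) → ZMod 3, x ≠ y →
        ∀ t₁ ∈ T, ∀ t₂ ∈ T, x ∈ t₁ → y ∈ t₁ → x ∈ t₂ → y ∈ t₂ → t₁ = t₂) ∧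
    stsCl T (Set.range (basePt n)) = X ∧
    (∀ i : Fin n, stsCl T (basePt n '' {j | j ≠ i}) = H i ∧ H i ⊂ X) ∧
    (∀ S : Set (Fin (n - 1) → ZMod 3), S ⊂ Set.range (basePt n) →
      stsCl T S ≠ X) := by
  intro H hH X hX T hT
  subst hH hX hT
  set a := basePt n with ha
  set H : Fin n → Set (Fin (n - 1) → ZMod 3) :=
    fun i => (affineSpan (ZMod 3) (a '' {j | j ≠ i}) : Set _) with hH
  set T : Set (Finset (Fin (n - 1) → ZMod 3)) :=
    {t | t.card = 3 ∧ ∑ x ∈ t, x = 0 ∧ ∃ i, ↑t ⊆ H i} with hT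
  have hTmem : ∀ t ∈ T, t.card = 3 ∧ ∑ x ∈ t, x = 0 ∧ ∃ i, ↑t ⊆ H i := fun t ht => ht
  -- base points in spans
  have hbase : ∀ i j : Fin n, j ≠ i → a j ∈ H i :=
    fun i j hj => subset_affineSpan _ _ ⟨j, hj, rfl⟩
  -- part 1
  have part1 : ∀ x y : Fin (n - 1) → ZMod 3, x ≠ y →
      ∀ t₁ ∈ T, ∀ t₂ ∈ T, x ∈ t₁ → y ∈ t₁ → x ∈ t₂ → y ∈ t₂ → t₁ = t₂ := by
    intro x y hxy t₁ h₁ t₂ h₂ hx1 hy1 hx2 hy2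
    obtain ⟨c1, s1, -⟩ := hTmem t₁ h₁
    obtain ⟨c2, s2, -⟩ := hTmem t₂ h₂
    rw [triple_eq c1 s1 hx1 hy1 hxy, triple_eq c2 s2 hx2 hy2 hxy]
  -- H i is closed
  have hHclosed : ∀ i, StsClosed T (H i) := by
    intro i t ht x hxt y hyt hxy hx hy z hz
    obtain ⟨c, s, -⟩ := hTmem t ht
    rw [triple_eq c s hxt hyt hxy] at hz
    simp only [Finset.mem_insert, Finset.mem_singleton] at hz
    rcases hz with rfl | rfl | rfl
    · exact hx
    · exact hy
    · exact neg_sub_mem _ hx hy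
  -- X is closed
  have hXclosed : StsClosed T (⋃ i, H i) := by
    intro t ht x hxt y hyt hxy hx hy z hz
    obtain ⟨-, -, i, hti⟩ := hTmem t ht
    exact Set.mem_iUnion.2 ⟨i, hti hz⟩
  -- key: closure of the base minus a i equals H i
  have key : ∀ i, stsCl T (a '' {j | j ≠ i}) = H i := by
    intro i
    apply subset_antisymm
    · exact stsCl_le (fun x hx => by obtain ⟨j, hj, rfl⟩ := hx; exact hbase i j hj)
        (hHclosed i)
    · set S := a '' {j | j ≠ i} with hS
      set W := stsCl T S ∩ H i with hW
      have hSW : S ⊆ W := fun x hx =>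
        ⟨subset_stsCl T S hx, by obtain ⟨j, hj, rfl⟩ := hx; exact hbase i j hj⟩
      have hWc : ∀ x ∈ W, ∀ y ∈ W, -x - y ∈ W := by
        rintro x ⟨hx1, hx2⟩ y ⟨hy1, hy2⟩
        by_cases hxy : x = y
        · subst hxy; rw [neg_sub_self3]; exact ⟨hx1, hx2⟩
        · have hz : -x - y ∈ H i := neg_sub_mem _ hx2 hy2
          refine ⟨?_, hz⟩
          have hmemT : ({x, y, -x - y} : Finset _) ∈ T := by
            refine ⟨line_card hxy, line_sum hxy, i, ?_⟩
            intro u hu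
            simp only [Finset.coe_insert, Finset.coe_singleton, Set.mem_insert_iff,
              Set.mem_singleton_iff] at hu
            rcases hu with rfl | rfl | rfl
            · exact hx2
            · exact hy2
            · exact hz
          exact stsCl_closed T S _ hmemT x (by simp) y (by simp) hxy hx1 hy1
            (-x - y) (by simp)
      have hspan : (affineSpan (ZMod 3) S : Set _) ⊆ W := span_le_of_closedW hSW hWc
      exact fun x hx => (hspan hx).1
  -- a i not in H i
  have hnot : ∀ i : Fin n, a i ∉ H i := by
    intro i hmem
    by_cases hi : (i : ℕ) = 0
    · have hsub : H i ⊆ {x : Fin (n - 1) → ZMod 3 | ∑ j, x j = 1} := by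
        apply span_le_of_closedW
        · rintro _ ⟨j, hj, rfl⟩
          have hj0 : (j : ℕ) ≠ 0 := fun h => hj (Fin.ext (by omega))
          simp only [Set.mem_setOf_eq, ha, basePt, dif_neg hj0]
          simp [Finset.sum_pi_single']
        · intro x hx y hy
          simp only [Set.mem_setOf_eq] at hx hy ⊢
          have e : ∑ j, (-x - y) j = -∑ j, x j - ∑ j, y j := by
            simp [sub_eq_add_neg, Finset.sum_add_distrib]
          rw [e, hx, hy]; decide
      have h2 := hsub hmem
      simp only [Set.mem_setOf_eq, ha, basePt, dif_pos hi] at h2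
      simp at h2
    · have hlt := i.isLt
      have hsub : H i ⊆ {x : Fin (n - 1) → ZMod 3 |
          x ⟨(i : ℕ) - 1, by omega⟩ = 0} := by
        apply span_le_of_closedW
        · rintro _ ⟨j, hj, rfl⟩
          by_cases hj0 : (j : ℕ) = 0
          · simp [ha, basePt, dif_pos hj0]
          · have hne : (⟨(j : ℕ) - 1, by have := j.isLt; omega⟩ : Fin (n - 1)) ≠
                ⟨(i : ℕ) - 1, by omega⟩ := by
              simp only [ne_eq, Fin.mk.injEq]
              intro h
              exact hj (Fin.ext (by omega))
            simp only [Set.mem_setOf_eq, ha, basePt, dif_neg hj0]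
            exact Pi.single_eq_of_ne (M := fun _ : Fin (n-1) => ZMod 3) hne.symm 1
        · intro x hx y hy
          simp only [Set.mem_setOf_eq] at hx hy ⊢
          simp only [Pi.sub_apply, Pi.neg_apply, hx, hy]
          simp
      have h2 := hsub hmem
      simp only [Set.mem_setOf_eq, ha, basePt, dif_neg hi] at h2
      rw [Pi.single_eq_same] at h2
      exact one_ne_zero h2
  -- a j in X
  have hnontriv : Nontrivial (Fin n) := Fin.nontrivial_iff_two_le.2 (by omega)
  have hmemX : ∀ j : Fin n, a j ∈ ⋃ i, H i := by
    intro j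
    obtain ⟨i, hi⟩ := exists_ne j
    exact Set.mem_iUnion.2 ⟨i, hbase i j (Ne.symm hi)⟩
  -- part 2
  have part2 : stsCl T (Set.range a) = ⋃ i, H i := by
    apply subset_antisymm
    · exact stsCl_le (fun x hx => by obtain ⟨j, rfl⟩ := hx; exact hmemX j) hXclosed
    · intro x hx
      obtain ⟨i, hxi⟩ := Set.mem_iUnion.1 hx
      rw [← key i] at hxi
      exact stsCl_mono (by rintro _ ⟨j, -, rfl⟩; exact ⟨j, rfl⟩) hxi
  refine ⟨part1, part2, fun i => ⟨key i, ?_, ?_⟩, ?_⟩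
  · exact Set.subset_iUnion H i
  · intro hEq
    exact hnot i (hEq (hmemX i))
  · intro S hS hclS
    obtain ⟨v, hvr, hvS⟩ := Set.exists_of_ssubset hS
    obtain ⟨i, rfl⟩ := hvr
    have hS' : S ⊆ a '' {j | j ≠ i} := by
      intro x hx
      obtain ⟨j, rfl⟩ := hS.1 hx
      exact ⟨j, fun e => hvS (e ▸ hx), rfl⟩
    have h1 : stsCl T S ⊆ H i := (key i) ▸ stsCl_mono hS'
    have h2 : a i ∈ stsCl T S := hclS ▸ hmemX i
    exact hnot i (h1 h2)
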